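/- Let x ∈ ℝⁿ with entries sorted in descending magnitude |x_{(1)}| ≥ ... ≥ |x_{(n)}|, and suppose ‖x‖₁ > s > 0. Define M = max{ j : |x_{(j)}| - (1/j)(∑_{i=1}^j |x_{(i)}| - s) > 0 } and λ = (1/M)(∑_{i=1}^M |x_{(i)}| - s). Then λ > 0, and for every j ≤ M we have |x_{(j)}| > λ, while for every j > M we have |x_{(j)}| ≤ λ; consequently the soft-thresholded vector z_i = sgn(x_i)·max(|x_i| - λ, 0) has exactly M nonzero entries. -/

import Mathlib

open Finset in
/-- Lemma 2 of Duchi et al. 2008: for `x` sorted in descending magnitude with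
`‖x‖₁ > s > 0`, setting `M = max{ j : |x_j| - (1/j)(∑_{i≤j}|x_i| - s) > 0 }` and
`λ = (1/M)(∑_{i≤M}|x_i| - s)`, we have `λ > 0`, `|x_j| > λ` for `j ≤ M`, `|x_j| ≤ λ`
for `j > M`, and the soft-thresholded vector has exactly `M` nonzero entries. -/
theorem duchi_threshold_lemma {n : ℕ} (x : ℕ → ℝ) (s : ℝ) (hs : 0 < s)
    (hsorted : ∀ i j, i ≤ j → j < n → |x j| ≤ |x i|)
    (hsum : s < ∑ i ∈ range n, |x i|)
    (M : ℕ) (hM1 : 1 ≤ M) (hMn : M ≤ n)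
    (hMcond : |x (M - 1)| - (1 / (M : ℝ)) * ((∑ i ∈ range M, |x i|) - s) > 0)
    (hMmax : ∀ j, 1 ≤ j → j ≤ n →
      |x (j - 1)| - (1 / (j : ℝ)) * ((∑ i ∈ range j, |x i|) - s) > 0 → j ≤ M)
    (lam : ℝ) (hlam : lam = (1 / (M : ℝ)) * ((∑ i ∈ range M, |x i|) - s))
    (z : ℕ → ℝ) (hz : ∀ i, z i = Real.sign (x i) * max (|x i| - lam) 0) :
    0 < lam ∧
      (∀ j, 1 ≤ j → j ≤ M → lam < |x (j - 1)|) ∧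
      (∀ j, M < j → j ≤ n → |x (j - 1)| ≤ lam) ∧
      ((range n).filter fun i => z i ≠ 0).card = M := by
  have hMpos : (0:ℝ) < (M:ℝ) := by exact_mod_cast hM1
  have hlamlt : lam < |x (M-1)| := by rw [hlam]; linarith
  -- λ > 0
  have hlampos : 0 < lam := by
    by_contra h
    push_neg at h
    have hSM : (∑ i ∈ range M, |x i|) - s ≤ 0 := by
      rw [hlam] at h
      nlinarith [one_div_pos.mpr hMpos]
    have hMn' : M < n := by
      rcases lt_or_eq_of_le hMn with h' | h'
      · exact h'
      · exfalso; rw [h'] at hSM; linarith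
    have hxMpos : 0 < |x M| := by
      rcases (abs_nonneg (x M)).lt_or_eq with h' | h'
      · exact h'
      · exfalso
        have hzero : ∀ i ∈ Ico M n, |x i| = 0 := by
          intro i hi
          rw [mem_Ico] at hi
          have := hsorted M i hi.1 hi.2
          have := abs_nonneg (x i)
          linarith [h'.symm ▸ this]
        have hsplit : ∑ i ∈ range n, |x i| =
            (∑ i ∈ range M, |x i|) + ∑ i ∈ Ico M n, |x i| := by
          rw [range_eq_Ico, range_eq_Ico]
          exact (sum_Ico_consecutive (fun i => |x i|) (Nat.zero_le M) hMn).symm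
        rw [Finset.sum_eq_zero hzero] at hsplit
        simp at hsplit
        linarith
    -- condition at M+1 holds
    have hc : |x M| - (1 / ((M:ℝ)+1)) * ((∑ i ∈ range (M+1), |x i|) - s) > 0 := by
      rw [Finset.sum_range_succ]
      have ha : (0:ℝ) < 1 / ((M:ℝ)+1) := by positivity
      have ha1 : (1 / ((M:ℝ)+1)) * ((M:ℝ)+1) = 1 := by field_simp
      nlinarith [mul_nonneg ha.le (neg_nonneg.mpr hSM), mul_pos ha hxMpos]
    have := hMmax (M+1) (by omega) (by omega) (by
      simpa [Nat.add_sub_cancel, Nat.cast_add, Nat.cast_one] using hc)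
    omega
  -- part 2
  have part2 : ∀ j, 1 ≤ j → j ≤ M → lam < |x (j - 1)| := by
    intro j hj1 hjM
    have : |x (M-1)| ≤ |x (j-1)| := hsorted (j-1) (M-1) (by omega) (by omega)
    linarith
  -- part 3
  have part3 : ∀ j, M < j → j ≤ n → |x (j - 1)| ≤ lam := by
    intro j hMj hjn
    have hMn' : M < n := lt_of_lt_of_le hMj hjn
    have hxM : |x M| ≤ lam := by
      have hfail : ¬ (|x M| - (1 / ((M:ℝ)+1)) * ((∑ i ∈ range (M+1), |x i|) - s) > 0) := by
        intro hc
        have := hMmax (M+1) (by omega) (by omega) (by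
          simpa [Nat.add_sub_cancel, Nat.cast_add, Nat.cast_one] using hc)
        omega
      push_neg at hfail
      rw [Finset.sum_range_succ] at hfail
      have hS : (∑ i ∈ range M, |x i|) - s = (M:ℝ) * lam := by
        rw [hlam]; field_simp
      have ha : (0:ℝ) < (M:ℝ)+1 := by positivity
      have key : ((M:ℝ)+1) * |x M| ≤ (∑ i ∈ range M, |x i|) + |x M| - s := by
        have := mul_le_mul_of_nonneg_left hfail ha.le
        have h1 : ((M:ℝ)+1) * ((1 / ((M:ℝ)+1)) * ((∑ i ∈ range M, |x i|) + |x M| - s))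
            = (∑ i ∈ range M, |x i|) + |x M| - s := by field_simp
        linarith [h1 ▸ this]
      nlinarith [key, hS, hMpos]
    calc |x (j-1)| ≤ |x M| := hsorted M (j-1) (by omega) (by omega)
      _ ≤ lam := hxM
  refine ⟨hlampos, part2, part3, ?_⟩
  have hziff : ∀ i, i < n → (z i ≠ 0 ↔ i < M) := by
    intro i hin
    constructor
    · intro hzi
      by_contra hiM
      push_neg at hiM
      have := part3 (i+1) (by omega) (by omega)
      simp only [Nat.add_sub_cancel] at this
      apply hzi
      rw [hz i, max_eq_right (by linarith)]
      ring
    · intro hiM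
      have hx : lam < |x i| := by
        have := part2 (i+1) (by omega) (by omega)
        simpa [Nat.add_sub_cancel] using this
      rw [hz i]
      apply mul_ne_zero
      · intro h0
        have h1 := Real.sign_eq_zero_iff.mp h0
        rw [h1] at hx; simp at hx; linarith
      · rw [max_eq_left (by linarith)]
        intro h0; linarith [sub_eq_zero.mp h0]
  have : ((range n).filter fun i => z i ≠ 0) = range M := by
    ext i
    simp only [mem_filter, mem_range]
    constructor
    · rintro ⟨hin, hzi⟩; exact (hziff i hin).mp hzi
    · intro hiM
      have hin : i < n := lt_of_lt_of_le hiM hMn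
      exact ⟨hin, (hziff i hin).mpr hiM⟩
  rw [this, card_range]
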